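/- Define g(a) := a·(1+a²)/(k0·(1+a²) + γ·a²) for a ≥ 0 (the b-value on the nullcline of f). If 8·k0 ≥ γ then g is monotonically increasing on [0, ∞); equivalently, g'(a) ≥ 0 for all a ≥ 0. Consequently, when 8k0 ≥ γ, for each b > 0 the equation f(a,b) = 0 has exactly one nonnegative solution a, so bistability fails. -/

import Mathlib

theorem stmt_10 (k0 γ : ℝ) (hk0 : 0 < k0) (hγ : 0 < γ) (hcond : 8 * k0 ≥ γ)
    (f : ℝ → ℝ → ℝ)
    (hf : ∀ a b, f a b = (k0 + γ * a ^ 2 / (1 + a ^ 2)) * b - a)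
    (g : ℝ → ℝ)
    (hg : ∀ a, g a = a * (1 + a ^ 2) / (k0 * (1 + a ^ 2) + γ * a ^ 2)) :
    MonotoneOn g (Set.Ici 0) ∧
    (∀ a : ℝ, 0 ≤ a → 0 ≤ deriv g a) ∧
    (∀ b : ℝ, 0 < b → ∃! a : ℝ, 0 ≤ a ∧ f a b = 0) := by
  have hgf : g = fun a => a * (1 + a ^ 2) / (k0 * (1 + a ^ 2) + γ * a ^ 2) := funext hg
  subst hgf
  have hD : ∀ a : ℝ, 0 < k0 * (1 + a ^ 2) + γ * a ^ 2 := by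
    intro a; nlinarith [sq_nonneg a]
  -- strict monotonicity
  have hsm : StrictMonoOn (fun a => a * (1 + a ^ 2) / (k0 * (1 + a ^ 2) + γ * a ^ 2))
      (Set.Ici (0:ℝ)) := by
    intro a ha b hb hab
    simp only [Set.mem_Ici] at ha hb
    rw [div_lt_div_iff₀ (hD a) (hD b)]
    have hexpr : 0 < k0 * (1 + a ^ 2) * (1 + b ^ 2) + γ * (a * b) * (a * b - 1) := by
      nlinarith [sq_nonneg (2 * (k0 + γ) * (a * b) + 2 * k0 - γ),
        mul_nonneg hγ.le (by linarith : (0:ℝ) ≤ 8 * k0 - γ),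
        mul_pos hk0 (mul_pos (sub_pos.2 hab) (sub_pos.2 hab)),
        mul_pos (mul_pos hk0 hγ) (sub_pos.2 hab)]
    nlinarith [mul_pos (sub_pos.2 hab) hexpr]
  refine ⟨hsm.monotoneOn, ?_, ?_⟩
  · -- derivative nonneg
    intro a ha
    have h1 : HasDerivAt (fun x : ℝ => x * (1 + x ^ 2)) (1 + 3 * a ^ 2) a := by
      have h := (hasDerivAt_id a).mul ((hasDerivAt_const a (1:ℝ)).add (hasDerivAt_pow 2 a))
      convert h using 1
      case e'_9 =>
        simp
        ring
      all_goals rfl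
    have h2 : HasDerivAt (fun x : ℝ => k0 * (1 + x ^ 2) + γ * x ^ 2)
        (k0 * (2 * a) + γ * (2 * a)) a := by
      have h := (((hasDerivAt_const a (1:ℝ)).add (hasDerivAt_pow 2 a)).const_mul k0).add
        ((hasDerivAt_pow 2 a).const_mul γ)
      convert h using 1
      case e'_9 =>
        simp
      all_goals rfl
    have hdiv := h1.div h2 (hD a).ne'
    rw [show deriv (fun a : ℝ => a * (1 + a ^ 2) / (k0 * (1 + a ^ 2) + γ * a ^ 2)) a = _ from hdiv.deriv]
    apply div_nonneg
    · nlinarith [sq_nonneg (2 * (k0 + γ) * a ^ 2 + 2 * k0 - γ),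
        mul_nonneg hγ.le (by linarith : (0:ℝ) ≤ 8 * k0 - γ), sq_nonneg a,
        mul_pos hk0 hγ]
    · positivity
  · -- existence and uniqueness
    intro b hb
    have hiff : ∀ a : ℝ, f a b = 0 ↔ a * (1 + a ^ 2) / (k0 * (1 + a ^ 2) + γ * a ^ 2) = b := by
      intro a
      have h1 : (1:ℝ) + a ^ 2 ≠ 0 := by positivity
      rw [hf, sub_eq_zero, div_eq_iff (hD a).ne']
      constructor
      · intro h
        field_simp at h
        linear_combination -h
      · intro h
        field_simp
        linear_combination -h
    set A := max 1 ((k0 + γ) * b) with hA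
    have hA1 : (1:ℝ) ≤ A := le_max_left _ _
    have hAb : (k0 + γ) * b ≤ A := le_max_right _ _
    have hA0 : (0:ℝ) ≤ A := by linarith
    have hgA : b ≤ A * (1 + A ^ 2) / (k0 * (1 + A ^ 2) + γ * A ^ 2) := by
      rw [le_div_iff₀ (hD A)]
      nlinarith [mul_nonneg hb.le hγ.le,
        mul_le_mul_of_nonneg_right hAb (by positivity : (0:ℝ) ≤ 1 + A ^ 2)]
    have hcont : Continuous (fun a : ℝ => a * (1 + a ^ 2) / (k0 * (1 + a ^ 2) + γ * a ^ 2)) := by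
      apply Continuous.div (by continuity) (by continuity)
      exact fun x => (hD x).ne'
    have hg0 : (fun a : ℝ => a * (1 + a ^ 2) / (k0 * (1 + a ^ 2) + γ * a ^ 2)) 0 = 0 := by
      simp
    have hsub := intermediate_value_Icc hA0 hcont.continuousOn
    have hbmem : b ∈ Set.Icc ((fun a : ℝ => a * (1 + a ^ 2) / (k0 * (1 + a ^ 2) + γ * a ^ 2)) 0)
        ((fun a : ℝ => a * (1 + a ^ 2) / (k0 * (1 + a ^ 2) + γ * a ^ 2)) A) := by
      rw [hg0]; exact ⟨hb.le, hgA⟩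
    obtain ⟨a, hamem, hga⟩ := hsub hbmem
    refine ⟨a, ⟨hamem.1, (hiff a).2 hga⟩, ?_⟩
    intro y ⟨hy0, hyf⟩
    have hgy := (hiff y).1 hyf
    exact hsm.injOn (Set.mem_Ici.2 hy0) (Set.mem_Ici.2 hamem.1) (hgy.trans hga.symm)
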